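/- Let V be a vector space of dimension 2m (m ≥ 2) over an algebraically closed field K of characteristic zero, and let L_1, …, L_m be 2-dimensional subspaces of V which together span V. Then there exists a 2-dimensional subspace N of the space of alternating bilinear forms on V such that every nonzero A ∈ N has dim rad(A) ≤ 2, and the set of nonzero radicals {rad(A) : A ∈ N, A ≠ 0, rad(A) ≠ 0} is exactly {L_1, …, L_m}. -/

import Mathlib

/-- Let `V` have dimension `2m` (`m ≥ 2`) over an algebraically closed field of
characteristic zero, and let `L₁, …, L_m` be `2`-dimensional subspaces spanning `V`. Then
there is a `2`-dimensional space `N` of alternating bilinear forms on `V` such that every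
nonzero `A ∈ N` has `dim rad(A) ≤ 2` and the set of nonzero radicals of elements of `N` is
exactly `{L₁, …, L_m}`. -/
theorem statement13 (K : Type*) [Field K] [IsAlgClosed K] [CharZero K]
    (V : Type*) [AddCommGroup V] [Module K V] [FiniteDimensional K V]
    (m : ℕ) (hm : 2 ≤ m) (hV : Module.finrank K V = 2 * m)
    (L : Fin m → Submodule K V) (hL : ∀ i, Module.finrank K (L i) = 2)
    (hspan : ⨆ i, L i = ⊤) :
    ∃ N : Submodule K (V →ₗ[K] V →ₗ[K] K),
      (∀ A ∈ N, ∀ v, A v v = 0) ∧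
      Module.finrank K N = 2 ∧
      (∀ A ∈ N, A ≠ 0 → Module.finrank K (LinearMap.ker A) ≤ 2) ∧
      {W : Submodule K V | ∃ A ∈ N, A ≠ 0 ∧ LinearMap.ker A ≠ ⊥ ∧ LinearMap.ker A = W} =
        Set.range L := by
  classical
  -- bases of the L i
  let b : (i : Fin m) → Module.Basis (Fin 2) K (L i) := fun i => Module.finBasisOfFinrankEq K (L i) (hL i)
  set f : (Σ _ : Fin m, Fin 2) → V := fun p => (b p.1 p.2 : V) with hf
  have hsp : ⊤ ≤ Submodule.span K (Set.range f) := by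
    rw [← hspan]
    refine iSup_le fun i => ?_
    have h1 : L i = Submodule.map (L i).subtype ⊤ := (Submodule.map_subtype_top _).symm
    rw [h1, ← (b i).span_eq, Submodule.map_span]
    refine Submodule.span_le.2 ?_
    rintro _ ⟨_, ⟨j, rfl⟩, rfl⟩
    exact Submodule.subset_span ⟨⟨i, j⟩, rfl⟩
  have hcard : Fintype.card (Σ _ : Fin m, Fin 2) = Module.finrank K V := by
    simp [hV, mul_comm]
  let BV : Module.Basis (Σ _ : Fin m, Fin 2) K V := basisOfTopLeSpanOfCardEqFinrank f hsp hcard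
  have hBV : ∀ p, BV p = f p := fun p => by
    rw [coe_basisOfTopLeSpanOfCardEqFinrank]
  have hsig : ∀ {i k : Fin m} {j j' : Fin 2},
      (⟨i, j⟩ : Σ _ : Fin m, Fin 2) = ⟨k, j'⟩ → i = k ∧ j = j' := by
    intro i k j j' h
    cases h
    exact ⟨rfl, rfl⟩
  -- coordinates
  let c : V → (Σ _ : Fin m, Fin 2) → K := fun v p => BV.repr v p
  have hcd : ∀ p q, c (BV p) q = if p = q then 1 else 0 := by
    intro p q
    simp [c, Module.Basis.repr_self, Finsupp.single_apply]
  -- the forms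
  let D : (Fin m → K) → (V →ₗ[K] V →ₗ[K] K) := fun μ =>
    LinearMap.mk₂ K
      (fun v w => ∑ i : Fin m, μ i * (c v ⟨i, 0⟩ * c w ⟨i, 1⟩ - c v ⟨i, 1⟩ * c w ⟨i, 0⟩))
      (by intro v v' w
          simp only [c, map_add, Finsupp.coe_add, Pi.add_apply, ← Finset.sum_add_distrib]
          exact Finset.sum_congr rfl fun i _ => by ring)
      (by intro t v w
          simp only [c, map_smul, Finsupp.coe_smul, Pi.smul_apply, smul_eq_mul, Finset.mul_sum]
          exact Finset.sum_congr rfl fun i _ => by ring)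
      (by intro v w w'
          simp only [c, map_add, Finsupp.coe_add, Pi.add_apply, ← Finset.sum_add_distrib]
          exact Finset.sum_congr rfl fun i _ => by ring)
      (by intro t v w
          simp only [c, map_smul, Finsupp.coe_smul, Pi.smul_apply, smul_eq_mul, Finset.mul_sum]
          exact Finset.sum_congr rfl fun i _ => by ring)
  have hDapp : ∀ μ v w, D μ v w =
      ∑ i : Fin m, μ i * (c v ⟨i, 0⟩ * c w ⟨i, 1⟩ - c v ⟨i, 1⟩ * c w ⟨i, 0⟩) := fun μ v w => rfl
  -- linearity in μ
  have hDlin : ∀ (x y : K) (μ ν : Fin m → K), x • D μ + y • D ν = D (x • μ + y • ν) := by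
    intro x y μ ν
    ext v w
    simp only [LinearMap.add_apply, LinearMap.smul_apply, smul_eq_mul, hDapp, Finset.mul_sum,
      ← Finset.sum_add_distrib, Pi.add_apply, Pi.smul_apply]
    exact Finset.sum_congr rfl fun i _ => by ring
  -- evaluation lemmas
  have hDB1 : ∀ μ v (i : Fin m), D μ v (BV ⟨i, 1⟩) = μ i * c v ⟨i, 0⟩ := by
    intro μ v i
    rw [hDapp, Finset.sum_eq_single_of_mem i (Finset.mem_univ i)]
    · rw [hcd ⟨i, 1⟩ ⟨i, 1⟩, hcd ⟨i, 1⟩ ⟨i, 0⟩, if_pos rfl,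
        if_neg (fun h => by exact absurd (hsig h).2 (by decide))]
      ring
    · intro k _ hk
      rw [hcd ⟨i, 1⟩ ⟨k, 1⟩, hcd ⟨i, 1⟩ ⟨k, 0⟩,
        if_neg (fun h => hk (hsig h).1.symm),
        if_neg (fun h => by exact absurd (hsig h).2 (by decide))]
      ring
  have hDB0 : ∀ μ v (i : Fin m), D μ v (BV ⟨i, 0⟩) = -(μ i * c v ⟨i, 1⟩) := by
    intro μ v i
    rw [hDapp, Finset.sum_eq_single_of_mem i (Finset.mem_univ i)]
    · rw [hcd ⟨i, 0⟩ ⟨i, 0⟩, hcd ⟨i, 0⟩ ⟨i, 1⟩, if_pos rfl,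
        if_neg (fun h => by exact absurd (hsig h).2 (by decide))]
      ring
    · intro k _ hk
      rw [hcd ⟨i, 0⟩ ⟨k, 1⟩, hcd ⟨i, 0⟩ ⟨k, 0⟩,
        if_neg (fun h => by exact absurd (hsig h).2 (by decide)),
        if_neg (fun h => hk (hsig h).1.symm)]
      ring
  have hDeval : ∀ μ (i : Fin m), D μ (BV ⟨i, 0⟩) (BV ⟨i, 1⟩) = μ i := by
    intro μ i
    rw [hDB1, hcd ⟨i, 0⟩ ⟨i, 0⟩, if_pos rfl, mul_one]
  -- injectivity in μ
  have hD0 : ∀ μ, D μ = 0 → μ = 0 := by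
    intro μ h
    funext i
    have := hDeval μ i
    rw [h] at this
    simpa using this.symm
  -- kernel characterization
  have hker : ∀ μ (v : V), D μ v = 0 ↔
      ∀ i : Fin m, μ i ≠ 0 → c v ⟨i, 0⟩ = 0 ∧ c v ⟨i, 1⟩ = 0 := by
    intro μ v
    constructor
    · intro h i hi
      have e1 : μ i * c v ⟨i, 0⟩ = 0 := by
        rw [← hDB1 μ v i, h]; rfl
      have e0 : -(μ i * c v ⟨i, 1⟩) = 0 := by
        rw [← hDB0 μ v i, h]; rfl
      exact ⟨(mul_eq_zero.1 e1).resolve_left hi,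
        (mul_eq_zero.1 (neg_eq_zero.1 e0)).resolve_left hi⟩
    · intro h
      ext w
      rw [hDapp]
      refine Eq.trans (Finset.sum_eq_zero fun i _ => ?_) rfl
      by_cases hi : μ i = 0
      · simp [hi]
      · obtain ⟨h0, h1⟩ := h i hi
        simp [h0, h1]
  -- membership in L i via coordinates
  have hLmem : ∀ (i : Fin m) (v : V), v ∈ L i ↔
      ∀ p : Σ _ : Fin m, Fin 2, p.1 ≠ i → c v p = 0 := by
    intro i v
    constructor
    · intro hv p hp
      have hrepr := (b i).sum_repr ⟨v, hv⟩
      have hv' : v = ∑ j : Fin 2, ((b i).repr ⟨v, hv⟩ j) • (b i j : V) := by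
        have := congrArg (Submodule.subtype (L i)) hrepr
        simpa only [map_sum, Submodule.subtype_apply, Submodule.coe_smul] using this.symm
      rw [hv']
      simp only [c, map_sum, map_smul, Finsupp.coe_finset_sum, Finsupp.coe_smul,
        Finset.sum_apply, Pi.smul_apply, smul_eq_mul]
      refine Finset.sum_eq_zero fun j _ => ?_
      have hbe : (b i j : V) = BV ⟨i, j⟩ := (hBV ⟨i, j⟩).symm
      rw [hbe]
      have hne : (⟨i, j⟩ : Σ _ : Fin m, Fin 2) ≠ p := by
        intro h; exact hp (by rw [← h])
      have := hcd ⟨i, j⟩ p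
      rw [if_neg hne] at this
      simp only [c] at this
      rw [this, mul_zero]
    · intro h
      have hv : v = ∑ p : Σ _ : Fin m, Fin 2, c v p • BV p := (BV.sum_repr v).symm
      rw [hv]
      refine Submodule.sum_mem _ fun p _ => ?_
      by_cases hp : p.1 = i
      · have hmem : BV p ∈ L i := by
          rw [hBV]
          exact hp ▸ (b p.1 p.2).2
        exact Submodule.smul_mem _ _ hmem
      · rw [h p hp, zero_smul]; exact Submodule.zero_mem _
  -- kernel is ⊥ when all μ i ≠ 0
  have hbot : ∀ μ, (∀ i, μ i ≠ 0) → LinearMap.ker (D μ) = ⊥ := by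
    intro μ h
    refine (Submodule.eq_bot_iff _).2 fun v hv => ?_
    rw [LinearMap.mem_ker] at hv
    have hc := (hker μ v).1 hv
    have hall : ∀ p : Σ _ : Fin m, Fin 2, c v p = 0 := by
      rintro ⟨i, j⟩
      have := hc i (h i)
      fin_cases j
      · exact this.1
      · exact this.2
    calc v = ∑ p : Σ _ : Fin m, Fin 2, c v p • BV p := (BV.sum_repr v).symm
      _ = 0 := Finset.sum_eq_zero fun p _ => by rw [hall p, zero_smul]
  -- kernel is L i when μ vanishes exactly at i
  have hkerL : ∀ μ (i : Fin m), μ i = 0 → (∀ j, j ≠ i → μ j ≠ 0) →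
      LinearMap.ker (D μ) = L i := by
    intro μ i h0 hj
    ext v
    rw [LinearMap.mem_ker, hker, hLmem]
    constructor
    · rintro h ⟨k, j⟩ hk
      have := h k (hj k hk)
      fin_cases j
      · exact this.1
      · exact this.2
    · intro h k hk
      have hki : k ≠ i := fun e => hk (e ▸ h0)
      exact ⟨h ⟨k, 0⟩ hki, h ⟨k, 1⟩ hki⟩
  -- helper facts about the pencil coefficients
  have hmemN : ∀ A, A ∈ Submodule.span K
      {D (fun _ => (1 : K)), D (fun i => ((i : ℕ) : K))} ↔
      ∃ x y : K, A = D (fun i => x + y * ((i : ℕ) : K)) := by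
    intro A
    rw [Submodule.mem_span_pair]
    constructor
    · rintro ⟨x, y, rfl⟩
      refine ⟨x, y, ?_⟩
      rw [hDlin]
      congr 1
      funext i
      simp
    · rintro ⟨x, y, rfl⟩
      refine ⟨x, y, ?_⟩
      rw [hDlin]
      congr 1
      funext i
      simp
  have hcast : ∀ {j k : Fin m}, ((j : ℕ) : K) = ((k : ℕ) : K) → j = k :=
    fun h => Fin.val_injective (Nat.cast_injective h)
  have hxy : ∀ x y : K, (fun i : Fin m => x + y * ((i : ℕ) : K)) = 0 → x = 0 ∧ y = 0 := by
    intro x y h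
    have h0 := congrFun h ⟨0, by omega⟩
    have h1 := congrFun h ⟨1, by omega⟩
    simp only [Pi.zero_apply] at h0 h1
    have hx : x = 0 := by simpa using h0
    have hy : y = 0 := by
      rw [hx] at h1
      simpa using h1
    exact ⟨hx, hy⟩
  have hDzero : ∀ x y : K, x = 0 → y = 0 →
      D (fun i => x + y * ((i : ℕ) : K)) = 0 := by
    intro x y hx hy
    ext v w
    rw [hDapp]
    simp [hx, hy]
  -- the pencil
  refine ⟨Submodule.span K {D (fun _ => (1 : K)), D (fun i => ((i : ℕ) : K))}, ?_, ?_, ?_, ?_⟩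
  · -- alternating
    intro A hA v
    obtain ⟨x, y, rfl⟩ := (hmemN A).1 hA
    rw [hDapp]
    exact Eq.trans (Finset.sum_eq_zero fun i _ => by ring) rfl
  · -- rank two
    have hli : LinearIndependent K ![D (fun _ => (1 : K)), D (fun i => ((i : ℕ) : K))] := by
      refine (LinearIndependent.pair_iff (M := V →ₗ[K] V →ₗ[K] K)).2 ?_
      intro s t hst
      have h1 : D (s • (fun _ : Fin m => (1 : K)) + t • fun i : Fin m => ((i : ℕ) : K)) = 0 := by
        rw [← hDlin]; exact hst
      have h2 := hD0 _ h1
      have h3 : (fun i : Fin m => s + t * ((i : ℕ) : K)) = 0 := by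
        funext i
        have := congrFun h2 i
        simpa using this
      exact hxy s t h3
    have hr : ({D (fun _ => (1 : K)), D (fun i => ((i : ℕ) : K))} :
        Set (V →ₗ[K] V →ₗ[K] K)) =
        Set.range ![D (fun _ => (1 : K)), D (fun i => ((i : ℕ) : K))] := by
      simp only [Matrix.range_cons, Matrix.range_empty, Set.union_empty,
        Set.union_singleton]
      exact Set.pair_comm _ _
    rw [hr, finrank_span_eq_card hli]
    simp
  · -- kernels have dimension at most 2
    intro A hA hA0
    obtain ⟨x, y, rfl⟩ := (hmemN A).1 hA
    by_cases hz : ∃ i : Fin m, x + y * ((i : ℕ) : K) = 0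
    · obtain ⟨i, hi⟩ := hz
      have hy : y ≠ 0 := by
        intro hy0
        have hx0 : x = 0 := by rw [hy0] at hi; simpa using hi
        exact hA0 (hDzero x y hx0 hy0)
      have huniq : ∀ j, j ≠ i → x + y * ((j : ℕ) : K) ≠ 0 := by
        intro j hj hμj
        exact hj (hcast (mul_left_cancel₀ hy (by linear_combination hμj - hi)))
      rw [hkerL _ i hi huniq]
      exact (hL i).le
    · push_neg at hz
      rw [hbot _ hz]
      simp
  · -- the set of nonzero radicals
    ext W
    simp only [Set.mem_setOf_eq, Set.mem_range]
    constructor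
    · rintro ⟨A, hA, hA0, hkb, rfl⟩
      obtain ⟨x, y, rfl⟩ := (hmemN A).1 hA
      by_cases hz : ∃ i : Fin m, x + y * ((i : ℕ) : K) = 0
      · obtain ⟨i, hi⟩ := hz
        have hy : y ≠ 0 := by
          intro hy0
          have hx0 : x = 0 := by rw [hy0] at hi; simpa using hi
          exact hA0 (hDzero x y hx0 hy0)
        have huniq : ∀ j, j ≠ i → x + y * ((j : ℕ) : K) ≠ 0 := by
          intro j hj hμj
          exact hj (hcast (mul_left_cancel₀ hy (by linear_combination hμj - hi)))
        exact ⟨i, (hkerL _ i hi huniq).symm⟩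
      · push_neg at hz
        exact absurd (hbot _ hz) hkb
    · rintro ⟨i, rfl⟩
      have hμi : -((i : ℕ) : K) + 1 * ((i : ℕ) : K) = 0 := by ring
      have huniq : ∀ j, j ≠ i → -((i : ℕ) : K) + 1 * ((j : ℕ) : K) ≠ 0 := by
        intro j hj h
        exact hj (hcast (by linear_combination h))
      refine ⟨D (fun j => -((i : ℕ) : K) + 1 * ((j : ℕ) : K)),
        (hmemN _).2 ⟨-((i : ℕ) : K), 1, rfl⟩, ?_, ?_, hkerL _ i hμi huniq⟩
      · intro h
        exact one_ne_zero (hxy _ _ (hD0 _ h)).2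
      · rw [hkerL _ i hμi huniq]
        intro hb
        have h2 := hL i
        rw [hb] at h2
        simp at h2
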